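/- For any integer k ≥ 0, the space of ℝ³-valued polynomials of degree at most k in three variables decomposes as a direct sum P_k³ = ∇P_{k+1} ⊕ (x × P_{k-1}³), where x × P_{k-1}³ = {x × q(x) : q ∈ P_{k-1}³}. -/

import Mathlib

open MvPolynomial

/-- Scalar polynomials of degree at most `n` (with `P_{-1} = {0}` for negative `n`). -/
noncomputable def Pscal (n : ℤ) : Submodule ℝ (MvPolynomial (Fin 3) ℝ) :=
  if 0 ≤ n then restrictTotalDegree (Fin 3) ℝ n.toNat else ⊥

/-- Vector polynomials of degree at most `n` in each component. -/
noncomputable def Pvec (n : ℤ) : Submodule ℝ (Fin 3 → MvPolynomial (Fin 3) ℝ) :=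
  Submodule.pi Set.univ fun _ : Fin 3 => Pscal n

/-- The gradient as a linear map on polynomials. -/
noncomputable def gradLM : MvPolynomial (Fin 3) ℝ →ₗ[ℝ] (Fin 3 → MvPolynomial (Fin 3) ℝ) where
  toFun p := fun i => pderiv i p
  map_add' p q := by funext i; simp
  map_smul' c p := by funext i; simp

/-- The linear map `q ↦ x × q(x)` on vector polynomials. -/
noncomputable def crossX : (Fin 3 → MvPolynomial (Fin 3) ℝ) →ₗ[ℝ]
    (Fin 3 → MvPolynomial (Fin 3) ℝ) where
  toFun q := fun i => X (i + 1) * q (i + 2) - X (i + 2) * q (i + 1)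
  map_add' p q := by funext i; simp [mul_add]; ring
  map_smul' c p := by funext i; simp [mul_smul_comm, smul_sub]


-- Euler for monomials
lemma X_mul_pderiv_monomial {σ : Type*} [DecidableEq σ] (i : σ) (d : σ →₀ ℕ) (a : ℝ) :
    X i * pderiv i (monomial d a) = (d i) • monomial d a := by
  rw [pderiv_monomial]
  by_cases h : d i = 0
  · simp [h]
  · have hd : d - Finsupp.single i 1 + Finsupp.single i 1 = d := by
      ext j
      by_cases hj : j = i
      · subst hj; simp [Finsupp.single_apply]; omega
      · simp [Finsupp.single_apply, hj, Ne.symm hj]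
    calc X i * monomial (d - Finsupp.single i 1) (a * d i)
        = monomial (Finsupp.single i 1) 1 * monomial (d - Finsupp.single i 1) (a * d i) := by
          rw [X]
      _ = (d i) • monomial d a := by
          rw [monomial_mul]
          rw [add_comm, hd]
          simp [smul_monomial, nsmul_eq_mul, mul_comm]

lemma euler {m : ℕ} {p : MvPolynomial (Fin 3) ℝ} (hp : p.IsHomogeneous m) :
    ∑ i : Fin 3, X i * pderiv i p = m • p := by
  conv_lhs => rw [p.as_sum]
  simp only [map_sum, Finset.mul_sum]
  rw [Finset.sum_comm]
  calc ∑ d ∈ p.support, ∑ i : Fin 3, X i * pderiv i (monomial d (coeff d p))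
      = ∑ d ∈ p.support, m • monomial d (coeff d p) := by
        apply Finset.sum_congr rfl
        intro d hd
        have hdm : d.degree = m := by
          by_contra h
          exact (mem_support_iff.mp hd) (hp.coeff_eq_zero h)
        rw [← hdm]
        simp only [_root_.X_mul_pderiv_monomial]
        rw [Finsupp.degree_apply, Finset.sum_subset (Finset.subset_univ d.support)
          (fun x _ hx => Finsupp.notMem_support_iff.mp hx), ← Finset.sum_smul]
    _ = m • p := by rw [← Finset.smul_sum, ← p.as_sum]

lemma pderiv_isHomogeneous {m : ℕ} {p : MvPolynomial (Fin 3) ℝ}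
    (hp : p.IsHomogeneous (m + 1)) (i : Fin 3) : (pderiv i p).IsHomogeneous m := by
  rw [← mem_homogeneousSubmodule]
  have hps : pderiv i p = ∑ d ∈ p.support, (pderiv i) (monomial d (coeff d p)) := by
    conv_lhs => rw [p.as_sum]
    rw [map_sum]
  rw [hps]
  apply Submodule.sum_mem
  intro d hd
  rw [pderiv_monomial, mem_homogeneousSubmodule]
  by_cases h : d i = 0
  · simp [h, isHomogeneous_zero]
  · apply isHomogeneous_monomial
    have hdm : d.degree = m + 1 := by
      by_contra hne
      exact (mem_support_iff.mp hd) (hp.coeff_eq_zero hne)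
    have : (d - Finsupp.single i 1) + Finsupp.single i 1 = d := by
      ext j
      by_cases hj : j = i
      · subst hj; simp [Finsupp.single_apply]; omega
      · simp [Finsupp.single_apply, hj, Ne.symm hj]
    have h2 := congrArg Finsupp.degree this
    have hadd : ((d - Finsupp.single i 1) + Finsupp.single i 1).degree
        = (d - Finsupp.single i 1).degree + (Finsupp.single i 1).degree := by
      simp only [Finsupp.degree_eq_weight_one, map_add]
    have hone : (Finsupp.single i 1).degree = 1 := by
      simp [Finsupp.degree_apply, Finsupp.support_single_ne_zero _ one_ne_zero]
    rw [hadd, hdm, hone] at h2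
    omega

lemma isHomogeneous_zero_pderiv {p : MvPolynomial (Fin 3) ℝ}
    (hp : p.IsHomogeneous 0) (i : Fin 3) : pderiv i p = 0 := by
  have : p = C (coeff 0 p) := by
    rw [← homogeneousComponent_zero]
    rw [homogeneousComponent_of_mem ((mem_homogeneousSubmodule 0 p).mpr hp)]
    simp
  rw [this, pderiv_C]

lemma totalDegree_pderiv_le (p : MvPolynomial (Fin 3) ℝ) (i : Fin 3) (n : ℕ)
    (hp : p.totalDegree ≤ n + 1) : (pderiv i p).totalDegree ≤ n := by
  conv_lhs => rw [← p.sum_homogeneousComponent]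
  rw [map_sum]
  refine le_trans (totalDegree_finset_sum _ _) ?_
  apply Finset.sup_le
  intro m hm
  rcases Nat.eq_zero_or_eq_succ_pred m with h0 | hs
  · subst h0
    rw [isHomogeneous_zero_pderiv (homogeneousComponent_isHomogeneous 0 p) i]
    simp
  · have hh : ((homogeneousComponent m) p).IsHomogeneous (m.pred + 1) := by
      rw [Nat.succ_eq_add_one] at hs
      rw [← hs]; exact homogeneousComponent_isHomogeneous m p
    refine le_trans (pderiv_isHomogeneous hh i).totalDegree_le ?_
    rw [Finset.mem_range] at hm
    omega

open Finset in
lemma crossX_apply (q : Fin 3 → MvPolynomial (Fin 3) ℝ) (i : Fin 3) :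
    crossX q i = X (i + 1) * q (i + 2) - X (i + 2) * q (i + 1) := rfl

lemma gradLM_apply (p : MvPolynomial (Fin 3) ℝ) (i : Fin 3) :
    gradLM p i = pderiv i p := rfl

open Finset in
lemma dot_crossX (q : Fin 3 → MvPolynomial (Fin 3) ℝ) :
    ∑ i : Fin 3, X i * crossX q i = 0 := by
  simp only [crossX_apply, Fin.sum_univ_three]
  show X 0 * (X 1 * q 2 - X 2 * q 1) + X 1 * (X 2 * q 0 - X 0 * q 2)
      + X 2 * (X 0 * q 1 - X 1 * q 0) = 0
  ring

open Finset in
lemma cross_curl (w : Fin 3 → MvPolynomial (Fin 3) ℝ) (i : Fin 3) :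
    crossX (fun j => pderiv (j+1) (w (j+2)) - pderiv (j+2) (w (j+1))) i
      = pderiv i (∑ j : Fin 3, X j * w j) - w i - ∑ j : Fin 3, X j * pderiv j (w i) := by
  match i with
  | 0 | 1 | 2 =>
    simp only [crossX_apply, Fin.reduceAdd, Fin.sum_univ_three, map_add, pderiv_mul,
      pderiv_X_self,
      pderiv_X_of_ne (by decide : (1:Fin 3) ≠ 0), pderiv_X_of_ne (by decide : (2:Fin 3) ≠ 0),
      pderiv_X_of_ne (by decide : (0:Fin 3) ≠ 1), pderiv_X_of_ne (by decide : (2:Fin 3) ≠ 1),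
      pderiv_X_of_ne (by decide : (0:Fin 3) ≠ 2), pderiv_X_of_ne (by decide : (1:Fin 3) ≠ 2)]
    ring

lemma mem_Pscal_iff (k : ℕ) (p : MvPolynomial (Fin 3) ℝ) :
    p ∈ Pscal (k : ℤ) ↔ p.totalDegree ≤ k := by
  rw [Pscal, if_pos (by positivity : (0:ℤ) ≤ (k:ℤ))]
  rw [mem_restrictTotalDegree]
  norm_num

lemma mem_Pvec_iff (k : ℕ) (v : Fin 3 → MvPolynomial (Fin 3) ℝ) :
    v ∈ Pvec (k : ℤ) ↔ ∀ i, (v i).totalDegree ≤ k := by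
  rw [Pvec, Submodule.mem_pi]
  constructor
  · intro h i; exact (mem_Pscal_iff k (v i)).mp (h i (Set.mem_univ i))
  · intro h i _; exact (mem_Pscal_iff k (v i)).mpr (h i)

lemma Pvec_neg_one : Pvec ((0 : ℤ) - 1) = ⊥ := by
  have : Pscal ((0:ℤ) - 1) = ⊥ := by rw [Pscal, if_neg (by norm_num)]
  rw [Pvec, this]
  ext v
  simp [Submodule.mem_pi, funext_iff]

open Finset in
lemma main_homog (k m : ℕ) (hmk : m ≤ k) (v : Fin 3 → MvPolynomial (Fin 3) ℝ)
    (hv : ∀ i, (v i).IsHomogeneous m) :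
    v ∈ Submodule.map gradLM (Pscal ((k:ℤ) + 1)) ⊔ Submodule.map crossX (Pvec ((k:ℤ) - 1)) := by
  have hm1 : ((m : ℝ) + 1) ≠ 0 := by positivity
  set S : MvPolynomial (Fin 3) ℝ := ∑ j : Fin 3, X j * v j with hS
  set p : MvPolynomial (Fin 3) ℝ := ((m : ℝ) + 1)⁻¹ • S with hp
  have hShom : S.IsHomogeneous (m + 1) := by
    rw [hS]
    apply IsHomogeneous.sum
    intro j _
    simpa [add_comm] using (isHomogeneous_X ℝ j).mul (hv j)
  have hphom : p.IsHomogeneous (m + 1) := by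
    rw [hp, ← mem_homogeneousSubmodule] at *
    exact Submodule.smul_mem _ _ hShom
  set w : Fin 3 → MvPolynomial (Fin 3) ℝ := fun i => v i - pderiv i p with hw
  have hwhom : ∀ i, (w i).IsHomogeneous m := by
    intro i
    rw [hw]
    simp only
    rw [← mem_homogeneousSubmodule]
    exact Submodule.sub_mem _ ((mem_homogeneousSubmodule _ _).mpr (hv i))
      ((mem_homogeneousSubmodule _ _).mpr (pderiv_isHomogeneous hphom i))
  have hxw : ∑ j : Fin 3, X j * w j = 0 := by
    have heu := euler hphom
    have hsplit : ∑ j : Fin 3, X j * w j = S - ∑ j : Fin 3, X j * pderiv j p := by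
      rw [hS, ← Finset.sum_sub_distrib]
      apply Finset.sum_congr rfl
      intro j _
      rw [hw]
      ring
    have hSp : ((m + 1 : ℕ) : ℝ) • p = S := by
      rw [hp, smul_smul]
      push_cast
      rw [mul_inv_cancel₀ hm1, one_smul]
    rw [hsplit, heu, ← Nat.cast_smul_eq_nsmul ℝ, hSp, sub_self]
  set q : Fin 3 → MvPolynomial (Fin 3) ℝ :=
    (-((m : ℝ) + 1)⁻¹) • fun j => pderiv (j+1) (w (j+2)) - pderiv (j+2) (w (j+1)) with hq
  have hcross : crossX q = w := by
    funext i
    rw [hq, map_smul]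
    have h1 := cross_curl w i
    rw [hxw] at h1
    simp only [map_zero, zero_sub] at h1
    have h2 : ∑ j : Fin 3, X j * pderiv j (w i) = m • w i := euler (hwhom i)
    rw [Pi.smul_apply, h1, h2, ← Nat.cast_smul_eq_nsmul ℝ]
    match_scalars
    all_goals
      have hm1' : (1 + (m:ℝ)) ≠ 0 := by positivity
      field_simp
      try ring
  have hpq : v = gradLM p + crossX q := by
    funext i
    rw [hcross]
    show v i = pderiv i p + w i
    rw [hw]
    ring
  rw [hpq]
  apply Submodule.add_mem
  · refine Submodule.mem_sup_left (Submodule.mem_map_of_mem ?_)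
    have : ((k:ℤ) + 1) = ((k+1 : ℕ) : ℤ) := by push_cast; ring
    rw [this, mem_Pscal_iff]
    refine le_trans hphom.totalDegree_le (by omega)
  · refine Submodule.mem_sup_right (Submodule.mem_map_of_mem ?_)
    rcases Nat.eq_zero_or_pos k with hk0 | hkpos
    · subst hk0
      have hb : Pvec (((0:ℕ):ℤ) - 1) = ⊥ := by
        rw [show (((0:ℕ):ℤ) - 1) = ((0:ℤ) - 1) by norm_num, Pvec_neg_one]
      rw [hb]
      have hm0 : m = 0 := by omega
      subst hm0
      have : q = 0 := by
        funext j
        rw [hq]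
        simp [isHomogeneous_zero_pderiv (hwhom _)]
      rw [this]
      exact Submodule.zero_mem _
    · have : ((k:ℤ) - 1) = ((k - 1 : ℕ) : ℤ) := by omega
      rw [this, mem_Pvec_iff]
      have hdeg : ∀ a b : Fin 3, ((pderiv a) (w b)).totalDegree ≤ k - 1 := by
        intro a b
        apply totalDegree_pderiv_le
        refine le_trans (hwhom b).totalDegree_le ?_
        omega
      intro j
      rw [hq, Pi.smul_apply]
      refine le_trans (totalDegree_smul_le _ _) ?_
      exact le_trans (totalDegree_sub _ _) (max_le (hdeg _ _) (hdeg _ _))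

/-- `P_k³ = ∇P_{k+1} ⊕ (x × P_{k-1}³)`. -/
theorem Pk_decomposition_grad_cross (k : ℕ) :
    (Submodule.map gradLM (Pscal ((k : ℤ) + 1)) ⊔
        Submodule.map crossX (Pvec ((k : ℤ) - 1)) = Pvec (k : ℤ)) ∧
      Disjoint (Submodule.map gradLM (Pscal ((k : ℤ) + 1)))
        (Submodule.map crossX (Pvec ((k : ℤ) - 1))) := by
  constructor
  · apply le_antisymm
    · apply sup_le
      · rintro v ⟨p, hp, rfl⟩
        rw [mem_Pvec_iff]
        intro i
        show (pderiv i p).totalDegree ≤ k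
        apply totalDegree_pderiv_le
        rw [show ((k:ℤ) + 1) = ((k+1 : ℕ) : ℤ) by push_cast; ring, SetLike.mem_coe,
          mem_Pscal_iff] at hp
        exact hp
      · rintro v ⟨q, hq, rfl⟩
        rw [mem_Pvec_iff]
        intro i
        rcases Nat.eq_zero_or_pos k with hk0 | hkpos
        · subst hk0
          rw [show (((0:ℕ):ℤ) - 1) = ((0:ℤ) - 1) by norm_num, Pvec_neg_one,
            SetLike.mem_coe, Submodule.mem_bot] at hq
          subst hq
          rw [map_zero]
          simp
        · rw [show ((k:ℤ) - 1) = ((k - 1 : ℕ) : ℤ) by omega, SetLike.mem_coe,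
            mem_Pvec_iff] at hq
          show (X (i+1) * q (i+2) - X (i+2) * q (i+1)).totalDegree ≤ k
          refine le_trans (totalDegree_sub _ _) (max_le ?_ ?_)
          · refine le_trans (totalDegree_mul _ _) ?_
            rw [totalDegree_X]
            have h := hq (i+2)
            omega
          · refine le_trans (totalDegree_mul _ _) ?_
            rw [totalDegree_X]
            have h := hq (i+1)
            omega
    · intro v hv
      rw [mem_Pvec_iff] at hv
      have hdecomp : v = ∑ m ∈ Finset.range (k+1),
          (fun i => homogeneousComponent m (v i)) := by
        funext i
        rw [Finset.sum_apply]
        have hsub : Finset.range ((v i).totalDegree + 1) ⊆ Finset.range (k+1) := by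
          apply Finset.range_subset_range.mpr
          have := hv i
          omega
        have hzero : ∀ m ∈ Finset.range (k+1), m ∉ Finset.range ((v i).totalDegree + 1) →
            homogeneousComponent m (v i) = 0 := by
          intro m _ hm
          apply homogeneousComponent_eq_zero
          rw [Finset.mem_range] at hm
          omega
        rw [← Finset.sum_subset hsub hzero]
        exact (sum_homogeneousComponent (v i)).symm
      rw [hdecomp]
      apply Submodule.sum_mem
      intro m hm
      rw [Finset.mem_range] at hm
      exact main_homog k m (by omega) _
        (fun i => homogeneousComponent_isHomogeneous m (v i))
  · rw [Submodule.disjoint_def]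
    rintro v ⟨p, hp, rfl⟩ ⟨q, hq, hqv⟩
    have hxv : ∑ i : Fin 3, X i * pderiv i p = 0 := by
      have h := dot_crossX q
      rw [hqv] at h
      exact h
    have hcomp : ∀ n, 0 < n → homogeneousComponent n p = 0 := by
      intro n hn
      rcases lt_or_ge p.totalDegree n with hlt | hle
      · exact homogeneousComponent_eq_zero _ _ hlt
      · have hsum : ∑ m ∈ Finset.range (p.totalDegree + 1),
            (m • homogeneousComponent m p) = 0 := by
          have h1 : ∀ m ∈ Finset.range (p.totalDegree + 1),
              m • homogeneousComponent m p
                = ∑ i : Fin 3, X i * pderiv i (homogeneousComponent m p) := by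
            intro m _
            exact (euler (homogeneousComponent_isHomogeneous m p)).symm
          rw [Finset.sum_congr rfl h1, Finset.sum_comm]
          have h2 : ∀ i : Fin 3,
              ∑ m ∈ Finset.range (p.totalDegree + 1),
                X i * pderiv i (homogeneousComponent m p) = X i * pderiv i p := by
            intro i
            rw [← Finset.mul_sum, ← map_sum, sum_homogeneousComponent]
          rw [Finset.sum_congr rfl (fun i _ => h2 i), hxv]
        have h3 := congrArg (homogeneousComponent n) hsum
        rw [map_sum, map_zero] at h3
        have h4 : ∑ m ∈ Finset.range (p.totalDegree + 1),
            homogeneousComponent n (m • homogeneousComponent m p)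
              = n • homogeneousComponent n p := by
          rw [Finset.sum_eq_single n]
          · rw [homogeneousComponent_of_mem
              ((homogeneousSubmodule (Fin 3) ℝ n).toAddSubmonoid.nsmul_mem
                ((mem_homogeneousSubmodule _ _).mpr
                  (homogeneousComponent_isHomogeneous n p)) n), if_pos rfl]
          · intro m _ hmn
            rw [homogeneousComponent_of_mem
              ((homogeneousSubmodule (Fin 3) ℝ m).toAddSubmonoid.nsmul_mem
                ((mem_homogeneousSubmodule _ _).mpr
                  (homogeneousComponent_isHomogeneous m p)) m), if_neg (Ne.symm hmn)]
          · intro hnot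
            exact absurd (Finset.mem_range.mpr (by omega)) hnot
        rw [h4] at h3
        have h5 : ((n:ℝ)) • homogeneousComponent n p = 0 := by
          rw [Nat.cast_smul_eq_nsmul]
          exact h3
        have h7 := congrArg (fun z => ((n:ℝ))⁻¹ • z) h5
        simpa [smul_smul, inv_mul_cancel₀ (show ((n:ℝ)) ≠ 0 by positivity)] using h7
    have hp0 : p = C (coeff 0 p) := by
      have hpc : p = homogeneousComponent 0 p := by
        conv_lhs => rw [← sum_homogeneousComponent p]
        apply Finset.sum_eq_single_of_mem
        · exact Finset.mem_range.mpr (by omega)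
        · intro m _ hm
          exact hcomp m (Nat.pos_of_ne_zero hm)
      rw [hpc, homogeneousComponent_zero]
      simp
    have hgrad : gradLM p = 0 := by
      funext i
      show pderiv i p = 0
      conv_lhs => rw [hp0]
      rw [pderiv_C]
    exact hgrad
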